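/- Let Γ = (V, ends) be a metric graph assembled from a finite edge set E with positive real length function l, let e_0 ∈ E be an edge with v ∈ ends(e_0), and let Γ′ = (V ∪ {v′}, ends′) be obtained from Γ by adding a new vertex v′ and replacing the endpoint v of e_0 by v′ (ends′ agrees with ends on all other edges). Assume Γ′ is connected. Then identifying v′ with v maps every walk of Γ′ to a walk of Γ of equal length with the corresponding endpoints; consequently, for any set S ⊆ V of initial vertices, for every edge e ∈ E and every t ≥ 0, the number of dynamic points on e at time t in the DP-system on Γ′ with initial set S is at most the number of dynamic points on e at time t in the DP-system on Γ with initial set S. -/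

import Mathlib

/-!
Common framework: metric multigraphs assembled from an edge set `E`
(`ends : E → Sym2 V` with distinct endpoints), walks, dynamic-point
systems, stabilization times, and structural graph notions.
-/

/-- Walks in a multigraph on vertices `V` with edge set `E` and endpoint map `ends`:
an alternating sequence of vertices and edges. -/
inductive MGWalk {E V : Type} (ends : E → Sym2 V) : V → V → Type where
  | nil (a : V) : MGWalk ends a a
  | cons {a b c : V} (e : E) (h : ends e = s(a, b)) (tail : MGWalk ends b c) :
      MGWalk ends a c

namespace MGWalk

variable {E V : Type} {ends : E → Sym2 V}

/-- Length of a walk with respect to an edge-length function. -/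
def length (l : E → ℝ) : ∀ {a b : V}, MGWalk ends a b → ℝ
  | _, _, nil _ => 0
  | _, _, cons e _ tail => l e + tail.length l

/-- The list of edge entries of a walk. -/
def edges : ∀ {a b : V}, MGWalk ends a b → List E
  | _, _, nil _ => []
  | _, _, cons e _ tail => e :: tail.edges

end MGWalk

/-- A DP-system on a metric graph assembled from `E`: the vertex set is finite,
no edge is a loop, the multigraph is connected, and the set of initial vertices
is nonempty. -/
def IsDPSystem {E V : Type} (ends : E → Sym2 V) (S : Set V) : Prop :=
  Finite V ∧ (∀ e, ¬ (ends e).IsDiag) ∧ (∀ a b : V, Nonempty (MGWalk ends a b)) ∧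
    S.Nonempty

/-- A dynamic point is present at time `t` at distance `s` from endpoint `x` of
edge `e` (on the arc leaving `x`) iff some walk from an initial vertex to `x`
has length `t - s`. -/
def IsPoint {E V : Type} (ends : E → Sym2 V) (l : E → ℝ) (S : Set V)
    (t : ℝ) (e : E) (x : V) (s : ℝ) : Prop :=
  x ∈ ends e ∧ 0 ≤ s ∧ s < l e ∧
    ∃ v₀ ∈ S, ∃ w : MGWalk ends v₀ x, w.length l = t - s

/-- Number of dynamic points on edge `e` at time `t`. -/
noncomputable def NptsEdge {E V : Type} (ends : E → Sym2 V) (l : E → ℝ)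
    (S : Set V) (e : E) (t : ℝ) : ℕ :=
  Set.ncard {p : V × ℝ | IsPoint ends l S t e p.1 p.2}

/-- Total number of dynamic points at time `t`. -/
noncomputable def Npts {E V : Type} (ends : E → Sym2 V) (l : E → ℝ)
    (S : Set V) (t : ℝ) : ℕ :=
  Set.ncard {p : E × V × ℝ | IsPoint ends l S t p.1 p.2.1 p.2.2}

/-- `T` is a stabilization bound: `T ≥ 0` and the total number of points is
constant from `T` on. -/
def IsStabBound {E V : Type} (ends : E → Sym2 V) (l : E → ℝ) (S : Set V)
    (T : ℝ) : Prop :=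
  0 ≤ T ∧ ∀ t ≥ T, Npts ends l S t = Npts ends l S T

/-- The stabilization time: the least stabilization bound. -/
noncomputable def stabTime {E V : Type} (ends : E → Sym2 V) (l : E → ℝ)
    (S : Set V) : ℝ :=
  sInf {T : ℝ | IsStabBound ends l S T}

/-- `T` is a stabilization bound for edge `e`. -/
def IsEdgeStabBound {E V : Type} (ends : E → Sym2 V) (l : E → ℝ) (S : Set V)
    (e : E) (T : ℝ) : Prop :=
  0 ≤ T ∧ ∀ t ≥ T, NptsEdge ends l S e t = NptsEdge ends l S e T

/-- The stabilization time of edge `e`. -/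
noncomputable def edgeStabTime {E V : Type} (ends : E → Sym2 V) (l : E → ℝ)
    (S : Set V) (e : E) : ℝ :=
  sInf {T : ℝ | IsEdgeStabBound ends l S e T}

/-- Membership in `LSTDP(E)` (given the underlying system is a DP-system):
its stabilization time is maximal among all DP-systems assembled from `E`. -/
def IsMaxStab {E : Type} (l : E → ℝ) {V : Type} (ends : E → Sym2 V)
    (S : Set V) : Prop :=
  ∀ (V' : Type) (ends' : E → Sym2 V') (S' : Set V'),
    IsDPSystem ends' S' → stabTime ends' l S' ≤ stabTime ends l S

/-- Degree of vertex `x` in the subgraph with edge set `C`. -/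
noncomputable def edgeDegree {E V : Type} (ends : E → Sym2 V) (C : Set E)
    (x : V) : ℕ :=
  Set.ncard {e ∈ C | x ∈ ends e}

/-- Degree of vertex `x` in the whole graph. -/
noncomputable def degree {E V : Type} (ends : E → Sym2 V) (x : V) : ℕ :=
  Set.ncard {e : E | x ∈ ends e}

/-- `x` is a vertex of the subgraph with edge set `C`. -/
def OnEdgeSet {E V : Type} (ends : E → Sym2 V) (C : Set E) (x : V) : Prop :=
  ∃ e ∈ C, x ∈ ends e

/-- The subgraph with edge set `C` is connected. -/
def EdgeSetConn {E V : Type} (ends : E → Sym2 V) (C : Set E) : Prop :=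
  ∀ a b : V, OnEdgeSet ends C a → OnEdgeSet ends C b →
    ∃ w : MGWalk ends a b, ∀ e ∈ w.edges, e ∈ C

/-- `C` is the edge set of a cycle: nonempty, connected, and every vertex of its
support has degree exactly two in it. -/
def IsCycleSet {E V : Type} (ends : E → Sym2 V) (C : Set E) : Prop :=
  C.Nonempty ∧ EdgeSetConn ends C ∧
    ∀ x : V, OnEdgeSet ends C x → edgeDegree ends C x = 2

/-- A bead graph: no vertex lies on two distinct cycles. -/
def IsBead {E V : Type} (ends : E → Sym2 V) : Prop :=
  ∀ C₁ C₂ : Set E, IsCycleSet ends C₁ → IsCycleSet ends C₂ → C₁ ≠ C₂ →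
    ∀ x : V, ¬ (OnEdgeSet ends C₁ x ∧ OnEdgeSet ends C₂ x)

/-- The graph has no cycles. -/
def IsAcyclicG {E V : Type} (ends : E → Sym2 V) : Prop :=
  ∀ C : Set E, ¬ IsCycleSet ends C

/-- `H` is the edge set of a path subgraph: nonempty, connected, acyclic, and
all degrees within `H` are at most two. -/
def IsPathSet {E V : Type} (ends : E → Sym2 V) (H : Set E) : Prop :=
  H.Nonempty ∧ EdgeSetConn ends H ∧ (∀ C ⊆ H, ¬ IsCycleSet ends C) ∧
    ∀ x : V, edgeDegree ends H x ≤ 2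

/-- `x` is a terminal vertex of the path subgraph `H`. -/
def IsHandleTerminal {E V : Type} (ends : E → Sym2 V) (H : Set E) (x : V) : Prop :=
  edgeDegree ends H x = 1

/-- The type `W(v, e)` of walks from `v` to an endpoint of edge `e`. -/
def WalkTo {E V : Type} (ends : E → Sym2 V) (v : V) (e : E) : Type :=
  { p : Σ x : V, MGWalk ends v x // p.1 ∈ ends e }

/-- The relation `≈` on `W(v, e)`: walks with the same final endpoint are related
iff their lengths are congruent modulo `2·l(e)`; walks with different final
endpoints are related iff the difference of their lengths is congruent to
`l(e)` modulo `2·l(e)`. -/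
def wapprox {E V : Type} (ends : E → Sym2 V) (l : E → ℝ) (v : V) (e : E)
    (w₁ w₂ : WalkTo ends v e) : Prop :=
  (w₁.1.1 = w₂.1.1 ∧
    ∃ k : ℤ, w₁.1.2.length l - w₂.1.2.length l = k * (2 * l e)) ∨
  (w₁.1.1 ≠ w₂.1.1 ∧
    ∃ k : ℤ, w₁.1.2.length l - w₂.1.2.length l - l e = k * (2 * l e))


lemma MGWalk.length_eq_sum {E V : Type} {ends : E → Sym2 V} (l : E → ℝ) :
    ∀ {a b : V} (w : MGWalk ends a b), w.length l = (w.edges.map l).sum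
  | _, _, .nil _ => rfl
  | _, _, .cons e h tail => by
      simp [MGWalk.length, MGWalk.edges, MGWalk.length_eq_sum l tail]

lemma MGWalk.card_mul_le_length {E V : Type} {ends : E → Sym2 V} (l : E → ℝ)
    (δ : ℝ) (hδ : ∀ e, δ ≤ l e) :
    ∀ {a b : V} (w : MGWalk ends a b), (w.edges.length : ℝ) * δ ≤ w.length l
  | _, _, .nil _ => by simp [MGWalk.length, MGWalk.edges]
  | _, _, .cons e h tail => by
      have := MGWalk.card_mul_le_length l δ hδ tail
      simp only [MGWalk.length, MGWalk.edges, List.length_cons]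
      push_cast
      nlinarith [hδ e]

def projWalk {E V : Type} (ends : E → Sym2 V) (ends' : E → Sym2 (Option V)) (v : V)
    (h : ∀ (e : E) (a b : Option V), ends' e = s(a, b) → ends e = s(a.getD v, b.getD v)) :
    ∀ {x y : Option V}, MGWalk ends' x y → MGWalk ends (x.getD v) (y.getD v)
  | _, _, .nil a => .nil _
  | _, _, .cons e he tail => .cons e (h e _ _ he) (projWalk ends ends' v h tail)

lemma projWalk_length {E V : Type} (ends : E → Sym2 V) (ends' : E → Sym2 (Option V)) (v : V)
    (h : ∀ (e : E) (a b : Option V), ends' e = s(a, b) → ends e = s(a.getD v, b.getD v))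
    (l : E → ℝ) :
    ∀ {x y : Option V} (w : MGWalk ends' x y),
      (projWalk ends ends' v h w).length l = w.length l
  | _, _, .nil a => rfl
  | _, _, .cons e he tail => by
      simp [projWalk, MGWalk.length, projWalk_length ends ends' v h l tail]

lemma pointSet_finite {E V : Type} [Fintype E] [Finite V] (ends : E → Sym2 V)
    (l : E → ℝ) (hl : ∀ e, 0 < l e) (S : Set V) (e : E) (t : ℝ) :
    {p : V × ℝ | IsPoint ends l S t e p.1 p.2}.Finite := by
  classical
  have hE : Nonempty E := ⟨e⟩
  set δ : ℝ := (Finset.univ.image l).min' (by simp [Finset.univ_nonempty]) with hδdef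
  have hδpos : 0 < δ := by
    have := Finset.min'_mem (Finset.univ.image l) (by simp [Finset.univ_nonempty])
    simp only [Finset.mem_image] at this
    obtain ⟨e', _, he'⟩ := this
    calc (0:ℝ) < l e' := hl e'
      _ = δ := he'
  have hδle : ∀ e', δ ≤ l e' := fun e' =>
    Finset.min'_le _ _ (by simp)
  set n : ℕ := ⌈t / δ⌉₊ with hn
  have hsub : {p : V × ℝ | IsPoint ends l S t e p.1 p.2} ⊆
      (Set.univ : Set V) ×ˢ
        ((fun L => t - L) '' ((fun es : List E => (es.map l).sum) ''
          {es : List E | es.length ≤ n})) := by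
    rintro ⟨x, s⟩ ⟨hx, hs0, hsl, v₀, hv₀, w, hw⟩
    refine ⟨trivial, ?_⟩
    refine ⟨w.length l, ⟨w.edges, ?_, (MGWalk.length_eq_sum l w).symm⟩, by rw [hw]; ring⟩
    have h1 : (w.edges.length : ℝ) * δ ≤ w.length l := MGWalk.card_mul_le_length l δ hδle w
    have h2 : w.length l ≤ t := by rw [hw]; linarith
    have : (w.edges.length : ℝ) ≤ t / δ := by
      rw [le_div_iff₀ hδpos]; linarith
    have := Nat.le_ceil (t / δ)
    simp only [Set.mem_setOf_eq]
    exact_mod_cast Nat.cast_le.mp (by push_cast; linarith : (w.edges.length : ℝ) ≤ (n : ℝ))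
  exact Set.Finite.subset (Set.Finite.prod (Set.finite_univ)
    (((List.finite_length_le E n).image _).image _)) hsub

/-- splitting an endpoint `v` of an edge `e₀` off to a new vertex
(the new vertex is `none : Option V`) maps, upon identifying the new vertex back
with `v`, every walk of the cut graph to a walk of the original graph of equal
length with the corresponding endpoints; consequently every edge carries at each
time `t ≥ 0` at most as many dynamic points in the cut system as in the original
one (for any nonempty initial set `S ⊆ V`). -/
theorem stmt9 {E : Type} [Fintype E] {V : Type} [Finite V]
    (ends : E → Sym2 V) (l : E → ℝ) (hl : ∀ e, 0 < l e)
    (hnd : ∀ e, ¬ (ends e).IsDiag)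
    (hconn : ∀ a b : V, Nonempty (MGWalk ends a b))
    (e₀ : E) (v u : V) (he₀ : ends e₀ = s(v, u))
    (ends' : E → Sym2 (Option V))
    (he₀' : ends' e₀ = s((none : Option V), some u))
    (hrest : ∀ e : E, e ≠ e₀ → ends' e = (ends e).map some)
    (hconn' : ∀ a b : Option V, Nonempty (MGWalk ends' a b)) :
    (∀ (x y : Option V) (w' : MGWalk ends' x y),
      ∃ w : MGWalk ends (x.getD v) (y.getD v), w.length l = w'.length l) ∧
    ∀ S : Set V, S.Nonempty → ∀ (e : E) (t : ℝ), 0 ≤ t →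
      NptsEdge ends' l (Option.some '' S) e t ≤ NptsEdge ends l S e t := by
  classical
  have hkey : ∀ (e : E) (a b : Option V), ends' e = s(a, b) →
      ends e = s(a.getD v, b.getD v) := by
    intro e a b hab
    by_cases he : e = e₀
    · subst he
      rw [he₀'] at hab
      rw [Sym2.eq_iff] at hab
      rcases hab with ⟨ha, hb⟩ | ⟨ha, hb⟩
      · rw [← ha, ← hb]; simpa using he₀
      · rw [← ha, ← hb]; simp only [Option.getD_some, Option.getD_none]
        rw [he₀, Sym2.eq_swap]
    · have hm : (ends e).map some = s(a, b) := by rw [← hrest e he]; exact hab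
      obtain ⟨p, q, hpq⟩ := Sym2.ind (f := fun z => ∃ p q, z = s(p, q))
        (fun p q => ⟨p, q, rfl⟩) (ends e)
      rw [hpq, Sym2.map_pair_eq, Sym2.eq_iff] at hm
      rcases hm with ⟨ha, hb⟩ | ⟨ha, hb⟩ <;> rw [← ha, ← hb] <;>
        simp only [Option.getD_some] <;> rw [hpq]
      rw [Sym2.eq_swap]
  refine ⟨fun x y w' => ⟨projWalk ends ends' v hkey w',
    projWalk_length ends ends' v hkey l w'⟩, ?_⟩
  intro S hS e t ht
  have hfin := pointSet_finite ends l hl S e t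
  refine Set.ncard_le_ncard_of_injOn (fun p : Option V × ℝ => (p.1.getD v, p.2)) ?_ ?_ hfin
  · rintro ⟨x, s⟩ ⟨hx, hs0, hsl, v₀, hv₀, w, hw⟩
    obtain ⟨w₀, hw₀S, rfl⟩ := hv₀
    refine ⟨?_, hs0, hsl, w₀, hw₀S, projWalk ends ends' v hkey w,
      by rw [projWalk_length]; exact hw⟩
    obtain ⟨a, b, hab⟩ := Sym2.ind (f := fun z => ∃ p q, z = s(p, q))
      (fun p q => ⟨p, q, rfl⟩) (ends' e)
    have := hkey e a b hab
    rw [hab, Sym2.mem_iff] at hx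
    rw [this, Sym2.mem_iff]
    rcases hx with rfl | rfl
    · exact Or.inl rfl
    · exact Or.inr rfl
  · rintro ⟨x₁, s₁⟩ ⟨hx₁, -⟩ ⟨x₂, s₂⟩ ⟨hx₂, -⟩ heq
    simp only [Prod.mk.injEq] at heq
    obtain ⟨hg, rfl⟩ := heq
    have hnone : ∀ x : Option V, x ∈ ends' e → x = none → e = e₀ := by
      intro x hx hxn
      by_contra hne
      rw [hrest e hne] at hx
      subst hxn
      rw [Sym2.mem_map] at hx
      obtain ⟨y, -, hy⟩ := hx
      exact Option.some_ne_none y hy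
    have hvne : v ≠ u := fun h => hnd e₀ (by rw [he₀, h]; exact Sym2.mk_isDiag_iff.mpr rfl)
    have : x₁ = x₂ := by
      match x₁, x₂ with
      | none, none => rfl
      | some a, some b => simp_all
      | none, some b =>
        exfalso
        have he := hnone none hx₁ rfl
        subst he
        rw [he₀', Sym2.mem_iff] at hx₂
        simp only [Option.getD_none, Option.getD_some] at hg
        rcases hx₂ with h | h
        · exact Option.some_ne_none _ h
        · rw [Option.some_inj] at h; subst h; exact hvne hg
      | some a, none =>
        exfalso
        have he := hnone none hx₂ rfl
        subst he
        rw [he₀', Sym2.mem_iff] at hx₁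
        simp only [Option.getD_none, Option.getD_some] at hg
        rcases hx₁ with h | h
        · exact Option.some_ne_none _ h
        · rw [Option.some_inj] at h; subst h; exact hvne hg.symm
    rw [this]
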